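/- Let B_w be a weighted backward shift on ℓ^p (1 ≤ p < ∞) with coordinatewise multiplication, where the weight sequence satisfies |w(n)| ≥ 1 for all n ≥ 2. Suppose there exists an integer m ≥ 2 such that Σ_{n≥2} 1/|w(2)w(3)⋯w(n)|^{p/m} = ∞. Then for every x ∈ ℓ^p, the coordinatewise power x^m is not frequently hypercyclic for B_w. In particular, B_w has no frequently hypercyclic algebra. -/

import Mathlib

open Filter
open scoped ENNReal

/-- Lower density of a set of natural numbers. -/
noncomputable def lowerDensity (A : Set ℕ) : ℝ :=
  Filter.atTop.liminf fun N : ℕ => ((A ∩ Set.Iic N).ncard : ℝ) / (N + 1)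

/-- A vector is frequently hypercyclic if it visits every nonempty open set along a set
of positive lower density. -/
def FreqHypercyclic {X : Type*} [TopologicalSpace X] (T : X → X) (x : X) : Prop :=
  ∀ U : Set X, IsOpen U → U.Nonempty → 0 < lowerDensity {n : ℕ | T^[n] x ∈ U}

lemma block_summable {a : ℕ → ℝ} (ha0 : ∀ n, 0 ≤ a n) (ha : Antitone a)
    {K : ℕ} (hK : 1 ≤ K) (hsum : Summable fun i => a (K * (i + 1))) :
    Summable a := by
  set S := ∑' i, a (K * (i + 1)) with hS
  have hSnn : ∀ I : ℕ, ∑ i ∈ Finset.range I, a (K * (i + 1)) ≤ S := fun I =>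
    Summable.sum_le_tsum _ (fun i _ => ha0 _) hsum
  have hblock : ∀ i : ℕ, ∑ j ∈ Finset.Ico (K * (i + 1)) (K * (i + 2)), a j
      ≤ K * a (K * (i + 1)) := by
    intro i
    have hcard : (Finset.Ico (K * (i + 1)) (K * (i + 2))).card = K := by
      rw [Nat.card_Ico]; ring_nf; omega
    calc ∑ j ∈ Finset.Ico (K * (i + 1)) (K * (i + 2)), a j
        ≤ ∑ _j ∈ Finset.Ico (K * (i + 1)) (K * (i + 2)), a (K * (i + 1)) := by
          refine Finset.sum_le_sum fun j hj => ha (Finset.mem_Ico.mp hj).1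
      _ = K * a (K * (i + 1)) := by rw [Finset.sum_const, hcard, nsmul_eq_mul]
  have key : ∀ I : ℕ, ∑ j ∈ Finset.range (K * (I + 1)), a j
      ≤ ∑ j ∈ Finset.range K, a j + K * ∑ i ∈ Finset.range I, a (K * (i + 1)) := by
    intro I
    induction I with
    | zero => simp [mul_one]
    | succ n ih =>
      have hsplit : ∑ j ∈ Finset.range (K * (n + 2)), a j
          = ∑ j ∈ Finset.range (K * (n + 1)), a j
            + ∑ j ∈ Finset.Ico (K * (n + 1)) (K * (n + 2)), a j := by
        rw [Finset.range_eq_Ico, Finset.range_eq_Ico]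
        exact (Finset.sum_Ico_consecutive _ (Nat.zero_le _) (by nlinarith)).symm
      have := hblock n
      rw [show n + 1 + 1 = n + 2 from rfl, hsplit, Finset.sum_range_succ]
      have hK' : (0:ℝ) ≤ (K:ℝ) := by positivity
      nlinarith
  refine summable_of_sum_range_le ha0 (c := ∑ j ∈ Finset.range K, a j + K * S) ?_
  intro n
  have h1 : ∑ j ∈ Finset.range n, a j ≤ ∑ j ∈ Finset.range (K * (n + 1)), a j := by
    refine Finset.sum_le_sum_of_subset_of_nonneg ?_ (fun j _ _ => ha0 j)
    exact Finset.range_subset_range.mpr (by nlinarith)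
  refine h1.trans ((key n).trans ?_)
  have hK' : (0:ℝ) ≤ (K:ℝ) := by positivity
  nlinarith [hSnn n]

lemma density_summable {a : ℕ → ℝ} (ha0 : ∀ n, 0 ≤ a n) (ha : Antitone a)
    {A : Set ℕ} (hA : 0 < lowerDensity A)
    (hs : Summable (A.indicator a)) : Summable a := by
  classical
  set f : ℕ → ℝ := fun N => ((A ∩ Set.Iic N).ncard : ℝ) / (N + 1) with hf
  have hf0 : ∀ N, 0 ≤ f N := fun N => by positivity
  -- A is infinite
  have hAinf : A.Infinite := by
    by_contra hfin
    rw [Set.not_infinite] at hfin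
    have hb : ∀ N : ℕ, f N ≤ (A.ncard : ℝ) / (N + 1) := by
      intro N
      show ((A ∩ Set.Iic N).ncard : ℝ) / (N + 1) ≤ _
      have hle : ((A ∩ Set.Iic N).ncard : ℝ) ≤ A.ncard := by
        exact_mod_cast Set.ncard_le_ncard Set.inter_subset_left hfin
      exact (div_le_div_iff_of_pos_right (by positivity)).mpr hle
    have htend : Tendsto f atTop (nhds 0) := by
      refine squeeze_zero hf0 hb ?_
      have : Tendsto (fun N : ℕ => ((N : ℝ) + 1)) atTop atTop :=
        tendsto_atTop_add_const_right _ 1 tendsto_natCast_atTop_atTop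
      simpa using this.const_div_atTop (A.ncard : ℝ)
    have : lowerDensity A = 0 := htend.liminf_eq
    rw [this] at hA; exact lt_irrefl _ hA
  set p : ℕ → Prop := fun n => n ∈ A with hp
  have hpinf : (setOf p).Infinite := hAinf
  -- eventual density bound
  set δ : ℝ := lowerDensity A / 2 with hδ
  have hδ0 : 0 < δ := by positivity
  have hev : ∀ᶠ N in atTop, δ < f N := by
    refine eventually_lt_of_lt_liminf ?_ (Filter.isBoundedUnder_of ⟨0, fun N => hf0 N⟩)
    rw [hδ]; exact half_lt_self hA
  obtain ⟨N₀, hN₀⟩ := eventually_atTop.mp hev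
  -- counting formula
  have hcount : ∀ N : ℕ, (A ∩ Set.Iic N).ncard = Nat.count p (N + 1) := by
    intro N
    rw [Nat.count_eq_card_filter_range]
    rw [show A ∩ Set.Iic N = ↑((Finset.range (N+1)).filter p) by
      ext x
      simp [hp, Nat.lt_succ_iff, and_comm]]
    exact Set.ncard_coe_finset _
  set K : ℕ := ⌈1 / δ⌉₊ with hK
  have hK1 : 1 ≤ K := Nat.one_le_ceil_iff.mpr (by positivity)
  -- nth bound
  have hnth : ∀ i : ℕ, N₀ ≤ i → Nat.nth p i < K * (i + 1) := by
    intro i hi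
    have hni : N₀ ≤ Nat.nth p i := le_trans hi ((Nat.nth_strictMono hpinf).le_apply)
    have hcnt : Nat.count p (Nat.nth p i + 1) = i + 1 :=
      Nat.count_nth_succ (fun hf => absurd hf hpinf)
    have h0 : δ < ((A ∩ Set.Iic (Nat.nth p i)).ncard : ℝ) / ((Nat.nth p i : ℝ) + 1) :=
      hN₀ (Nat.nth p i) hni
    have hcard : ((A ∩ Set.Iic (Nat.nth p i)).ncard : ℝ) = (i + 1 : ℕ) := by
      rw [hcount, hcnt]
    rw [hcard] at h0
    -- δ < (i+1)/(nth+1)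
    have hpos : (0:ℝ) < (Nat.nth p i : ℝ) + 1 := by positivity
    rw [lt_div_iff₀ hpos] at h0
    have h1δ : 1 / δ ≤ (K : ℝ) := Nat.le_ceil _
    have : ((Nat.nth p i : ℝ) + 1) < (1/δ) * ((i:ℝ) + 1) := by
      rw [div_mul_eq_mul_div, lt_div_iff₀ hδ0]
      push_cast at h0 ⊢
      nlinarith
    have : ((Nat.nth p i : ℝ) + 1) < (K : ℝ) * ((i:ℝ) + 1) := by
      refine this.trans_le (by gcongr)
    have hfin : (Nat.nth p i : ℝ) < ((K * (i + 1) : ℕ) : ℝ) := by push_cast; linarith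
    exact_mod_cast hfin
  -- partial sums of shifted block sequence bounded by tsum of indicator
  set S : ℝ := ∑' n, A.indicator a n with hSdef
  have hind0 : ∀ n, 0 ≤ A.indicator a n := fun n =>
    Set.indicator_nonneg (fun x _ => ha0 x) n
  have hbd : ∀ I : ℕ, ∑ i ∈ Finset.range I, a (K * ((i + N₀) + 1)) ≤ S := by
    intro I
    have h1 : ∀ i ∈ Finset.range I, a (K * ((i + N₀) + 1)) ≤ a (Nat.nth p (i + N₀)) := by
      intro i _
      exact ha (le_of_lt (hnth (i + N₀) (Nat.le_add_left _ _)))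
    refine le_trans (Finset.sum_le_sum h1) ?_
    have hinj : Set.InjOn (fun i => Nat.nth p (i + N₀)) (Finset.range I) := by
      intro x _ y _ hxy
      have := (Nat.nth_injective hpinf) hxy
      omega
    have heq : ∑ i ∈ Finset.range I, a (Nat.nth p (i + N₀))
        = ∑ n ∈ (Finset.range I).image (fun i => Nat.nth p (i + N₀)), A.indicator a n := by
      rw [Finset.sum_image (fun x hx y hy h => hinj hx hy h)]
      refine Finset.sum_congr rfl fun i _ => ?_
      rw [Set.indicator_of_mem (Nat.nth_mem_of_infinite hpinf _)]
    rw [heq]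
    exact Summable.sum_le_tsum _ (fun n _ => hind0 n) hs
  have hsummable : Summable fun i => a (K * ((i + N₀) + 1)) :=
    summable_of_sum_range_le (fun i => ha0 _) hbd
  have : Summable fun i => a (K * (i + 1)) := (summable_nat_add_iff N₀).mp hsummable
  exact block_summable ha0 ha hK1 this

/-- Let `B_w` be a weighted backward shift on `ℓ^p` (`1 ≤ p < ∞`),
with bounded weights `w(n)`, `n ≥ 2`, of modulus `≥ 1`. (Coordinates are indexed from
`0`, so the coordinate `i` corresponds to the classical index `i+1` and
`(B_w x)(i) = w(i+2) x(i+1)`.) If for some integer `m ≥ 2` the series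
`Σ_{n≥2} 1/|w(2)⋯w(n)|^{p/m}` diverges, then for every `x ∈ ℓ^p` the coordinatewise
power `x^m` is not frequently hypercyclic for `B_w`; in particular `B_w` has no
frequently hypercyclic algebra for the coordinatewise product. -/
theorem stmt10 (p : ℝ≥0∞) [Fact (1 ≤ p)] (hp : p ≠ ⊤)
    (w : ℕ → ℂ) (hw1 : ∀ n : ℕ, 2 ≤ n → 1 ≤ ‖w n‖) (hwb : ∃ C : ℝ, ∀ n, ‖w n‖ ≤ C)
    (hw0 : ∀ n : ℕ, 2 ≤ n → w n ≠ 0)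
    (T : lp (fun _ : ℕ => ℂ) p → lp (fun _ : ℕ => ℂ) p)
    (hT : ∀ (x : lp (fun _ : ℕ => ℂ) p) (i : ℕ), T x i = w (i + 2) * x (i + 1))
    (m : ℕ) (hm : 2 ≤ m)
    (hdiv : ¬ Summable fun n : ℕ =>
      (1 : ℝ) / (∏ k ∈ Finset.Icc 2 (n + 2), ‖w k‖) ^ (p.toReal / m)) :
    (∀ x : lp (fun _ : ℕ => ℂ) p, ∀ xm : lp (fun _ : ℕ => ℂ) p,
      (∀ i : ℕ, xm i = x i ^ m) → ¬ FreqHypercyclic T xm) ∧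
    (∀ S : Set (lp (fun _ : ℕ => ℂ) p),
      (0 : lp (fun _ : ℕ => ℂ) p) ∈ S →
      (∀ a ∈ S, ∀ b ∈ S, a + b ∈ S) →
      (∀ (c : ℂ), ∀ a ∈ S, c • a ∈ S) →
      (∀ a ∈ S, ∀ b ∈ S, ∀ ab : lp (fun _ : ℕ => ℂ) p,
        (∀ i : ℕ, ab i = a i * b i) → ab ∈ S) →
      S \ {0} ⊆ {x | FreqHypercyclic T x} → S = {0}) := by
  have hp1 : (1 : ℝ≥0∞) ≤ p := Fact.out
  have hp0 : p ≠ 0 := by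
    intro h; rw [h] at hp1; simp at hp1
  have hp'pos : 0 < p.toReal := ENNReal.toReal_pos hp0 hp
  have hmR : (0:ℝ) < (m : ℝ) := by exact_mod_cast (by omega : 0 < m)
  set e' : ℝ := p.toReal / m with he'def
  have he'pos : 0 < e' := div_pos hp'pos hmR
  set P : ℕ → ℝ := fun n => ∏ k ∈ Finset.Icc 2 (n + 2), ‖w k‖ with hPdef
  have hP1 : ∀ n, 1 ≤ P n := by
    intro n
    calc (1:ℝ) = ∏ _k ∈ Finset.Icc 2 (n + 2), (1:ℝ) := Finset.prod_const_one.symm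
      _ ≤ ∏ k ∈ Finset.Icc 2 (n + 2), ‖w k‖ :=
          Finset.prod_le_prod (fun k _ => zero_le_one)
            (fun k hk => hw1 k (Finset.mem_Icc.mp hk).1)
  have hPpos : ∀ n, 0 < P n := fun n => lt_of_lt_of_le one_pos (hP1 n)
  have hPsucc : ∀ n, P (n + 1) = P n * ‖w (n + 3)‖ := by
    intro n
    show (∏ k ∈ Finset.Icc 2 (n + 1 + 2), ‖w k‖) = _
    rw [show n + 1 + 2 = (n + 2) + 1 from rfl, Finset.prod_Icc_succ_top (by omega)]
  have hPmono : Monotone P := by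
    refine monotone_nat_of_le_succ fun n => ?_
    rw [hPsucc n]
    nlinarith [hPpos n, hw1 (n + 3) (by omega)]
  set a : ℕ → ℝ := fun n => (1 : ℝ) / P n ^ e' with hadef
  have ha0 : ∀ n, 0 ≤ a n := fun n =>
    le_of_lt (div_pos one_pos (Real.rpow_pos_of_pos (hPpos n) e'))
  have haanti : Antitone a := by
    refine antitone_nat_of_succ_le fun n => ?_
    have h1 : P n ^ e' ≤ P (n + 1) ^ e' :=
      Real.rpow_le_rpow (hPpos n).le (hPmono (Nat.le_succ n)) he'pos.le
    exact one_div_le_one_div_of_le (Real.rpow_pos_of_pos (hPpos n) e') h1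
  -- iterate formula
  have hiter : ∀ (n : ℕ) (z : lp (fun _ : ℕ => ℂ) p) (i : ℕ),
      (T^[n] z) i = (∏ k ∈ Finset.Icc (i + 2) (n + i + 1), w k) * z (n + i) := by
    intro n
    induction n with
    | zero =>
      intro z i
      rw [Finset.Icc_eq_empty (by omega)]
      simp
    | succ n ih =>
      intro z i
      rw [Function.iterate_succ_apply', hT, ih z (i + 1)]
      have e1 : Finset.Icc (i + 1 + 2) (n + (i + 1) + 1) = Finset.Icc (i + 3) (n + i + 2) := by
        congr 1 <;> omega
      have e2 : n + (i + 1) = n + 1 + i := by omega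
      have e3 : Finset.Icc (i + 2) (n + 1 + i + 1) = Finset.Icc (i + 2) (n + i + 2) := by
        congr 1 <;> omega
      have hsplit : (∏ k ∈ Finset.Icc (i + 2) (n + i + 2), w k)
          = w (i + 2) * ∏ k ∈ Finset.Icc (i + 3) (n + i + 2), w k := by
        have hicc : Finset.Icc (i + 2) (n + i + 2) = Finset.Ico (i + 2) (n + i + 3) :=
          (Finset.Ico_add_one_right_eq_Icc ..).symm
        have hicc2 : Finset.Icc (i + 3) (n + i + 2) = Finset.Ico (i + 3) (n + i + 3) :=
          (Finset.Ico_add_one_right_eq_Icc ..).symm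
        rw [hicc, hicc2]
        exact Finset.prod_eq_prod_Ico_succ_bot (by omega) w
      rw [e1, e2, e3, hsplit]
      ring
  have part1 : ∀ x : lp (fun _ : ℕ => ℂ) p, ∀ xm : lp (fun _ : ℕ => ℂ) p,
      (∀ i : ℕ, xm i = x i ^ m) → ¬ FreqHypercyclic T xm := by
    intro x xm hxm hfc
    set U : Set (lp (fun _ : ℕ => ℂ) p) := {z | 1/2 < ‖z 0‖} with hUdef
    have hUopen : IsOpen U := by
      rw [Metric.isOpen_iff]
      intro z hz
      have hz' : 1/2 < ‖z 0‖ := hz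
      refine ⟨‖z 0‖ - 1/2, by linarith, fun y hy => ?_⟩
      have h1 : ‖z 0 - y 0‖ ≤ ‖z - y‖ := by
        have := lp.norm_apply_le_norm hp0 (z - y) 0
        simpa using this
      have h2 : ‖z - y‖ < ‖z 0‖ - 1/2 := by
        rw [← dist_eq_norm, dist_comm]
        exact hy
      have h3 : ‖z 0‖ ≤ ‖z 0 - y 0‖ + ‖y 0‖ := by
        simpa using norm_add_le (z 0 - y 0) (y 0)
      show 1/2 < ‖y 0‖
      linarith
    have hUne : U.Nonempty := by
      refine ⟨lp.single p 0 (1 : ℂ), ?_⟩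
      have h1 : (lp.single p 0 (1 : ℂ) : lp (fun _ : ℕ => ℂ) p) 0 = 1 := by
        rw [lp.single_apply_self]
      simp only [hUdef, Set.mem_setOf_eq, h1]
      norm_num
    have hdens := hfc U hUopen hUne
    set A : Set ℕ := {n : ℕ | T^[n] xm ∈ U} with hAdef
    set c : ℝ := (1/2 : ℝ) ^ e' with hcdef
    have hc0 : 0 < c := Real.rpow_pos_of_pos one_half_pos _
    have hbound : ∀ n ∈ A, c * a n ≤ ‖x n‖ ^ p.toReal := by
      intro n hn
      have hn' : 1/2 < ‖(T^[n] xm) 0‖ := hn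
      rw [hiter n xm 0] at hn'
      rw [norm_mul, norm_prod] at hn'
      simp only [Nat.add_zero, Nat.zero_add] at hn'
      set Q : ℝ := ∏ k ∈ Finset.Icc 2 (n + 1), ‖w k‖ with hQdef
      have hQP : Q ≤ P n := by
        have : P n = Q * ‖w (n + 2)‖ := by
          rw [hPdef]
          simp only []
          rw [Finset.prod_Icc_succ_top (by omega : 2 ≤ n + 1 + 1)]
        have hQpos : 0 < Q := by
          rw [hQdef]
          exact Finset.prod_pos fun k hk =>
            lt_of_lt_of_le one_pos (hw1 k (Finset.mem_Icc.mp hk).1)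
        nlinarith [hw1 (n + 2) (by omega)]
      have hxmlow : 1 / (2 * P n) < ‖xm n‖ := by
        have h2 : 1/2 < P n * ‖xm n‖ := by
          have hnorm0 : 0 ≤ ‖xm n‖ := norm_nonneg _
          calc 1/2 < Q * ‖xm n‖ := hn'
            _ ≤ P n * ‖xm n‖ := mul_le_mul_of_nonneg_right hQP hnorm0
        rw [div_lt_iff₀ (mul_pos two_pos (hPpos n))]
        nlinarith
      -- ‖x n‖ ^ m ≥ 1/(2 P n)
      have hxml : 1 / (2 * P n) ≤ ‖x n‖ ^ m := by
        rw [hxm n, norm_pow] at hxmlow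
        exact hxmlow.le
      have hrpow : (1 / (2 * P n)) ^ e' ≤ (‖x n‖ ^ m) ^ e' :=
        Real.rpow_le_rpow (le_of_lt (div_pos one_pos (mul_pos two_pos (hPpos n))))
          hxml he'pos.le
      have hleft : (1 / (2 * P n)) ^ e' = c * a n := by
        rw [show (1 : ℝ) / (2 * P n) = (1/2) * (1 / P n) by ring]
        rw [Real.mul_rpow (by norm_num) (le_of_lt (div_pos one_pos (hPpos n)))]
        congr 1
        rw [Real.div_rpow (by norm_num) (hPpos n).le, Real.one_rpow]
      have hright : (‖x n‖ ^ m) ^ e' = ‖x n‖ ^ p.toReal := by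
        rw [← Real.rpow_natCast ‖x n‖ m, ← Real.rpow_mul (norm_nonneg _)]
        congr 1
        rw [he'def]; field_simp
      rw [hleft, hright] at hrpow
      exact hrpow
    have hindsum : Summable (A.indicator fun n => c * a n) := by
      have hxsum : Summable fun n => ‖x n‖ ^ p.toReal := (lp.memℓp x).summable hp'pos
      refine Summable.of_nonneg_of_le
        (fun n => Set.indicator_nonneg (fun k _ => mul_nonneg hc0.le (ha0 k)) n)
        (fun n => ?_) hxsum
      by_cases hn : n ∈ A
      · rw [Set.indicator_of_mem hn]; exact hbound n hn
      · rw [Set.indicator_of_notMem hn]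
        exact Real.rpow_nonneg (norm_nonneg _) _
    have hsa : Summable fun n => c * a n :=
      density_summable (fun n => mul_nonneg hc0.le (ha0 n)) (fun i j hij =>
        mul_le_mul_of_nonneg_left (haanti hij) hc0.le) hdens hindsum
    refine hdiv ?_
    have := hsa.mul_left c⁻¹
    have heq : (fun n => c⁻¹ * (c * a n)) = a := by
      funext n; rw [inv_mul_cancel_left₀ hc0.ne']
    rw [heq] at this
    exact this
  refine ⟨part1, ?_⟩
  intro S h0S haddS hsmulS hmulS hsubS
  refine Set.eq_singleton_iff_unique_mem.mpr ⟨h0S, fun z hzS => ?_⟩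
  by_contra hz0
  have hpowmem : ∀ k : ℕ, ∃ u ∈ S, ∀ i, (u : lp (fun _ : ℕ => ℂ) p) i = z i ^ (k + 1) := by
    intro k
    induction k with
    | zero => exact ⟨z, hzS, fun i => (pow_one _).symm⟩
    | succ k ih =>
      obtain ⟨u, huS, hu⟩ := ih
      have hmem : Memℓp (fun i => u i * z i) p := by
        apply memℓp_gen
        have hzsum : Summable fun i => ‖z i‖ ^ p.toReal := (lp.memℓp z).summable hp'pos
        refine Summable.of_nonneg_of_le (fun i => by positivity) (fun i => ?_)
          (hzsum.mul_left (‖u‖ ^ p.toReal))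
        have h1 : ‖u i * z i‖ ≤ ‖u‖ * ‖z i‖ := by
          rw [norm_mul]
          exact mul_le_mul_of_nonneg_right (lp.norm_apply_le_norm hp0 u i) (norm_nonneg _)
        calc ‖u i * z i‖ ^ p.toReal ≤ (‖u‖ * ‖z i‖) ^ p.toReal :=
              Real.rpow_le_rpow (norm_nonneg _) h1 hp'pos.le
          _ = ‖u‖ ^ p.toReal * ‖z i‖ ^ p.toReal :=
              Real.mul_rpow (norm_nonneg _) (norm_nonneg _)
      refine ⟨⟨fun i => u i * z i, hmem⟩, hmulS u huS z hzS _ (fun i => rfl), fun i => ?_⟩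
      show u i * z i = z i ^ (k + 1 + 1)
      rw [hu i, ← pow_succ]
  obtain ⟨u, huS, hu⟩ := hpowmem (m - 1)
  have hum : ∀ i, (u : lp (fun _ : ℕ => ℂ) p) i = z i ^ m := by
    intro i; rw [hu i]; congr 1; omega
  have hune : u ≠ 0 := by
    intro h
    apply hz0
    have hz : ∀ i, z i = 0 := by
      intro i
      have h2 : (u : lp (fun _ : ℕ => ℂ) p) i = 0 := by rw [h]; rfl
      rw [hum i] at h2
      exact pow_eq_zero_iff (by omega) |>.mp h2
    exact lp.eq_zero_iff_coeFn_eq_zero.mpr (funext hz)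
  exact part1 z u hum (hsubS ⟨huS, hune⟩)
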